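/- For a density p nondecreasing on [a,b] (a 'rising interval') with p(a) < p(b) and positive mass, the conditional mean of X on [a,b] is at least the midpoint (a+b)/2. -/
import Mathlib


open MeasureTheory Set

/-- On a rising interval `[a,b]` (density nondecreasing, strictly higher at the
right end) with positive mass, the conditional mean lies at or to the right of
the midpoint. -/
theorem rising_interval_mean_ge_midpoint
    (p : ℝ → ℝ) (a b : ℝ) (hab : a < b)
    (hp : ∀ x, 0 ≤ p x)
    (hmono : MonotoneOn p (Set.Icc a b))
    (hrise : p a < p b)
    (hint : IntegrableOn p (Set.Icc a b))
    (hmass : 0 < ∫ x in a..b, p x) :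
    (a + b) / 2 ≤ (∫ x in a..b, x * p x) / (∫ x in a..b, p x) := by
  set m : ℝ := (a + b) / 2 with hm
  have hab' : a ≤ b := hab.le
  have hpI : IntervalIntegrable p volume a b :=
    (intervalIntegrable_iff_integrableOn_Icc_of_le hab').mpr hint
  have hxpI : IntervalIntegrable (fun x => x * p x) volume a b := by
    rw [intervalIntegrable_iff_integrableOn_Icc_of_le hab']
    apply hint.bdd_mul (c := max |a| |b|)
    · exact aestronglyMeasurable_id.restrict
    · refine (ae_restrict_iff' measurableSet_Icc).mpr (ae_of_all _ ?_)
      intro x hx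
      rw [Real.norm_eq_abs]
      exact abs_le_max_abs_abs hx.1 hx.2
  have hqI : IntervalIntegrable (fun x => (x - m) * p x) volume a b := by
    have := hxpI.sub (hpI.const_mul m)
    simpa [sub_mul] using this
  have hqI' : IntervalIntegrable (fun x => (a + b - x - m) * p (a + b - x)) volume a b := by
    have := hqI.comp_sub_left (a + b)
    simpa using this.symm
  have hrefl : (∫ x in a..b, (a + b - x - m) * p (a + b - x))
      = ∫ x in a..b, (x - m) * p x := by
    have := intervalIntegral.integral_comp_sub_left
      (a := a) (b := b) (fun y => (y - m) * p y) (a + b)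
    simpa using this
  have hpt : ∀ x ∈ Set.Icc a b,
      0 ≤ (x - m) * p x + (a + b - x - m) * p (a + b - x) := by
    intro x hx
    have hx' : a + b - x ∈ Set.Icc a b := by
      constructor <;> [linarith [hx.2]; linarith [hx.1]]
    have heq : (x - m) * p x + (a + b - x - m) * p (a + b - x)
        = (x - m) * (p x - p (a + b - x)) := by rw [hm]; ring
    rw [heq]
    rcases le_total m x with h | h
    · have h2 : a + b - x ≤ x := by rw [hm] at h; linarith
      have := hmono hx' hx h2
      have h3 : 0 ≤ x - m := by linarith
      exact mul_nonneg h3 (by linarith)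
    · have h2 : x ≤ a + b - x := by rw [hm] at h; linarith
      have := hmono hx hx' h2
      have h3 := mul_nonneg (show (0:ℝ) ≤ m - x by linarith)
        (show 0 ≤ p (a + b - x) - p x by linarith)
      nlinarith
  have hsum : 0 ≤ ∫ x in a..b, ((x - m) * p x + (a + b - x - m) * p (a + b - x)) :=
    intervalIntegral.integral_nonneg hab' hpt
  rw [intervalIntegral.integral_add hqI hqI', hrefl] at hsum
  have hq : 0 ≤ ∫ x in a..b, (x - m) * p x := by linarith
  have hsplit : (∫ x in a..b, (x - m) * p x)
      = (∫ x in a..b, x * p x) - m * ∫ x in a..b, p x := by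
    rw [← intervalIntegral.integral_const_mul, ← intervalIntegral.integral_sub hxpI
      (hpI.const_mul m)]
    simp [sub_mul]
  rw [hsplit] at hq
  rw [le_div_iff₀ hmass]
  linarith
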